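/- Let E be a d-dimensional inner product space and n₁,...,n_k ∈ E (k ≥ d) such that any d of them are linearly independent. Let C(t) = ∩_{i=1}^k {x : ⟨x, n_i⟩ ≤ c_i(t)} be uniformly bounded with Lipschitz c_i, and suppose the active set J(t,x) = {i : ⟨x, n_i⟩ = c_i(t)} has cardinality ≤ d for all x ∈ C(t), t. Suppose x and y are two non-constant T-periodic solutions of -x' ∈ N_{C(t)}(x) with the same active sets J(t, x(t)) = J(t, y(t)) for all t and with ‖x(t) − y(t)‖ constant. Then x = y. -/

import Mathlib

open MeasureTheory InnerProductSpace

/-- The normal cone of convex analysis: empty outside `C`. -/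
def normalCone {E : Type*} [NormedAddCommGroup E] [InnerProductSpace ℝ E]
    (C : Set E) (x : E) : Set E :=
  {ζ | x ∈ C ∧ ∀ c ∈ C, ⟪ζ, c - x⟫_ℝ ≤ 0}

/-- A solution of the sweeping process `-x'(t) ∈ N_{C(t)}(x(t))`: a Lipschitz
function satisfying the differential inclusion a.e. -/
def IsSweepingSolution {E : Type*} [NormedAddCommGroup E] [InnerProductSpace ℝ E]
    (C : ℝ → Set E) (x : ℝ → E) : Prop :=
  (∃ K : NNReal, LipschitzWith K x) ∧ (∀ t, x t ∈ C t) ∧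
    ∀ᵐ t ∂(volume : Measure ℝ), ∃ v : E, HasDerivAt x v t ∧ -v ∈ normalCone (C t) (x t)

section Aux

open Set Filter Topology

/-- A real Lipschitz function with a.e. nonpositive derivative is antitone. -/
theorem StmtAux.lip_antitone_of_ae_deriv_nonpos {f : ℝ → ℝ} {K : NNReal} (hf : LipschitzWith K f)
    (hd : ∀ᵐ t ∂(volume : Measure ℝ), ∃ v, HasDerivAt f v t ∧ v ≤ 0) : Antitone f := by
  intro a b hab
  rcases eq_or_lt_of_le hab with rfl | hab
  · exact le_rfl
  -- main inequality with δ, ε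
  have key : ∀ δ > (0:ℝ), ∀ ε > (0:ℝ), f b - f a ≤ δ * (b - a) + 2 * K * ε := by
    intro δ hδ ε hε
    set N : Set ℝ := {t | ¬ ∃ v, HasDerivAt f v t ∧ v ≤ 0} with hN
    have hNnull : volume N = 0 := hd
    obtain ⟨U, hNU, hUopen, hUvol⟩ :=
      Set.exists_isOpen_lt_of_lt N (ENNReal.ofReal ε)
        (by rw [hNnull]; exact ENNReal.ofReal_pos.2 hε)
    have hUfin : volume U ≠ ⊤ := (hUvol.trans ENNReal.ofReal_lt_top).ne
    set m : ℝ → ℝ := fun t => (volume (U ∩ Ioc a t)).toReal with hm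
    have mfin : ∀ t, volume (U ∩ Ioc a t) ≠ ⊤ :=
      fun t => ((measure_mono inter_subset_left).trans_lt (lt_of_lt_of_le hUvol le_top)).ne
    have madd : ∀ t t', a ≤ t → t ≤ t' →
        m t' = m t + (volume (U ∩ Ioc t t')).toReal := by
      intro t t' hat htt
      have hdisj : Disjoint (U ∩ Ioc a t) (U ∩ Ioc t t') := by
        apply Disjoint.inter_left' ; apply Disjoint.inter_right'
        exact Set.Ioc_disjoint_Ioc_of_le le_rfl
      have hunion : (U ∩ Ioc a t) ∪ (U ∩ Ioc t t') = U ∩ Ioc a t' := by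
        rw [← Set.inter_union_distrib_left, Set.Ioc_union_Ioc_eq_Ioc hat htt]
      have : volume ((U ∩ Ioc a t) ∪ (U ∩ Ioc t t')) =
          volume (U ∩ Ioc a t) + volume (U ∩ Ioc t t') := measure_union hdisj
        ((hUopen.measurableSet).inter measurableSet_Ioc)
      rw [hunion] at this
      have hfin2 : volume (U ∩ Ioc t t') ≠ ⊤ :=
        ((measure_mono inter_subset_left).trans_lt (lt_of_lt_of_le hUvol le_top)).ne
      simp only [hm]
      rw [this, ENNReal.toReal_add (mfin t) hfin2]
    have mbound : ∀ t t', a ≤ t → t ≤ t' → m t' - m t ≤ t' - t := by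
      intro t t' hat htt
      rw [madd t t' hat htt]
      have : volume (U ∩ Ioc t t') ≤ volume (Ioc t t') := measure_mono inter_subset_right
      have h2 : (volume (U ∩ Ioc t t')).toReal ≤ t' - t := by
        refine le_trans (ENNReal.toReal_mono (by simp) this) ?_
        simp [Real.volume_Ioc, ENNReal.toReal_ofReal (sub_nonneg.2 htt)]
      linarith
    have mmono : ∀ t t', a ≤ t → t ≤ t' → m t ≤ m t' := by
      intro t t' hat htt
      rw [madd t t' hat htt]
      have : (0:ℝ) ≤ (volume (U ∩ Ioc t t')).toReal := ENNReal.toReal_nonneg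
      linarith
    have mcont : ContinuousOn m (Icc a b) := by
      have : LipschitzOnWith 1 m (Icc a b) := by
        apply LipschitzOnWith.of_dist_le_mul
        intro t ht t' ht'
        rcases le_total t' t with h | h
        · have := mbound t' t ht'.1 h
          have h2 : 0 ≤ m t - m t' := by linarith [mmono t' t ht'.1 h]
          rw [Real.dist_eq, Real.dist_eq, abs_of_nonneg h2,
            abs_of_nonneg (by linarith : (0:ℝ) ≤ t - t')]
          simpa using this
        · have := mbound t t' ht.1 h
          have h2 : 0 ≤ m t' - m t := by linarith [mmono t t' ht.1 h]
          rw [Real.dist_eq, Real.dist_eq, abs_sub_comm, abs_of_nonneg h2, abs_sub_comm,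
            abs_of_nonneg (by linarith : (0:ℝ) ≤ t' - t)]
          simpa using this
      exact this.continuousOn
    set F : ℝ → ℝ := fun t => f t - f a - δ * (t - a) - 2 * K * m t with hF
    set s : Set ℝ := {t | F t ≤ 0} with hs
    have ma : m a = 0 := by simp [hm]
    have hclosed : IsClosed (s ∩ Icc a b) := by
      have hFc : ContinuousOn F (Icc a b) := by
        apply ContinuousOn.sub
        apply ContinuousOn.sub
        apply ContinuousOn.sub
        · exact (hf.continuous.continuousOn)
        · exact continuousOn_const
        · exact (continuous_const.mul (continuous_id.sub continuous_const)).continuousOn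
        · exact continuousOn_const.mul mcont
      rw [Set.inter_comm]
      exact hFc.preimage_isClosed_of_isClosed isClosed_Icc isClosed_Iic
    have hmem : Icc a b ⊆ s := by
      apply hclosed.Icc_subset_of_forall_exists_gt
      · simp [hs, hF, ma]
      · rintro t ⟨hts, hta, htb⟩ z hz
        by_cases htN : t ∈ N
        · -- t in the open set U
          obtain ⟨r, hr, hball⟩ := Metric.isOpen_iff.1 hUopen t (hNU htN)
          obtain ⟨u, hu⟩ := exists_between (lt_min (lt_min (by linarith : t < t + r) hz) htb)
          have hut : t < u := hu.1
          have hur : u < t + r :=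
            lt_of_lt_of_le hu.2 (le_trans (min_le_left _ _) (min_le_left _ _))
          have huz : u ≤ z :=
            le_of_lt (lt_of_lt_of_le hu.2 (le_trans (min_le_left _ _) (min_le_right _ _)))
          have hub : u < b := lt_of_lt_of_le hu.2 (min_le_right _ _)
          refine ⟨u, ?_, hut, huz⟩
          have hsub : Ioc t u ⊆ U := by
            intro w hw
            apply hball
            rw [Metric.mem_ball, Real.dist_eq, abs_of_pos (by linarith [hw.1] : 0 < w - t)]
            linarith [hw.2]
          have : U ∩ Ioc t u = Ioc t u := inter_eq_self_of_subset_right hsub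
          have hmu : m u = m t + (u - t) := by
            rw [madd t u hta (le_of_lt hut), this]
            simp [Real.volume_Ioc, ENNReal.toReal_ofReal (by linarith : (0:ℝ) ≤ u - t)]
          have hfu : f u - f t ≤ K * (u - t) := by
            have := hf.dist_le_mul u t
            rw [Real.dist_eq, Real.dist_eq, abs_of_pos (by linarith : 0 < u - t)] at this
            calc f u - f t ≤ |f u - f t| := le_abs_self _
            _ ≤ K * (u - t) := this
          simp only [hs, hF, Set.mem_setOf_eq] at hts ⊢
          have hK : (0:ℝ) ≤ K := K.2
          rw [hmu]
          nlinarith [hts, hfu]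
        · -- t has a nonpositive derivative
          obtain ⟨v, hv, hv0⟩ := not_not.1 htN
          have hslope : Tendsto (slope f t) (𝓝[>] t) (𝓝 v) :=
            (hasDerivAt_iff_tendsto_slope.1 hv).mono_left
              (nhdsWithin_mono t (fun w hw => ne_of_gt hw))
          have hev : ∀ᶠ u in 𝓝[>] t, slope f t u < δ :=
            hslope.eventually_lt_const (lt_of_le_of_lt hv0 hδ)
          have hev2 : Ioo t (min z b) ∈ 𝓝[>] t :=
            Ioo_mem_nhdsGT_of_mem ⟨le_refl t, lt_min hz htb⟩
          obtain ⟨u, hu1, hu2⟩ := (hev.and hev2).exists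
          have hut : t < u := hu2.1
          have huz : u ≤ z := le_of_lt (lt_of_lt_of_le hu2.2 (min_le_left _ _))
          have hub : u ≤ b := le_of_lt (lt_of_lt_of_le hu2.2 (min_le_right _ _))
          refine ⟨u, ?_, hut, huz⟩
          have hfu : f u - f t ≤ δ * (u - t) := by
            have := hu1
            rw [slope_def_field, div_lt_iff₀ (by linarith : 0 < u - t)] at this
            linarith
          have hmut : m t ≤ m u := mmono t u hta (le_of_lt hut)
          simp only [hs, hF, Set.mem_setOf_eq] at hts ⊢
          have hK : (0:ℝ) ≤ K := K.2
          nlinarith [hts, hfu, hmut]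
    have hb : F b ≤ 0 := hmem ⟨le_of_lt hab, le_refl b⟩
    have hmb : m b ≤ ε := by
      apply ENNReal.toReal_le_of_le_ofReal (le_of_lt hε)
      exact le_trans (measure_mono inter_subset_left) (le_of_lt hUvol)
    simp only [hF] at hb
    have hK : (0:ℝ) ≤ K := K.2
    nlinarith [hb, hmb]
  -- conclude
  have : f b - f a ≤ 0 := by
    apply le_of_forall_pos_le_add
    intro cc hc
    have h1 : (0:ℝ) < cc / (2 * (b - a)) := div_pos hc (by linarith)
    have h2 : (0:ℝ) < cc / (2 * (2 * K + 1)) := by positivity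
    have := key _ h1 _ h2
    have hK : (0:ℝ) ≤ K := K.2
    have hba : b - a ≠ 0 := by linarith
    have e1 : cc / (2 * (b - a)) * (b - a) = cc / 2 := by field_simp
    have e2 : 2 * (K:ℝ) * (cc / (2 * (2 * K + 1))) ≤ cc / 2 := by
      have hq : cc / (2 * (2 * (K:ℝ) + 1)) * (2 * (2 * (K:ℝ) + 1)) = cc :=
        div_mul_cancel₀ _ (by positivity)
      nlinarith [h2.le, hK]
    calc f b - f a ≤ cc / 2 + 2 * K * (cc / (2 * (2 * K + 1))) := by rw [← e1]; linarith
    _ ≤ cc / 2 + cc / 2 := by linarith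
    _ = 0 + cc := by ring
  linarith

/-- density: a.e. point of a measurable set is an accumulation point of it. -/
theorem StmtAux.ae_acc {A : Set ℝ} (hA : MeasurableSet A) :
    ∀ᵐ t ∂(volume : Measure ℝ), t ∈ A → t ∈ closure (A \ {t}) := by
  filter_upwards [Besicovitch.ae_tendsto_measure_inter_div_of_measurableSet volume hA]
    with t ht hmem
  by_contra hcl
  rw [mem_closure_iff] at hcl
  push_neg at hcl
  obtain ⟨o, hoopen, hto, hdisj⟩ := hcl
  obtain ⟨ε, hε, hball⟩ := Metric.isOpen_iff.1 hoopen t hto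
  have hzero : ∀ r ∈ Ioo (0:ℝ) ε,
      volume (A ∩ Metric.closedBall t r) / volume (Metric.closedBall t r) = 0 := by
    intro r hr
    have hsub : A ∩ Metric.closedBall t r ⊆ {t} := by
      intro u hu
      by_contra hut
      have : u ∈ o ∩ (A \ {t}) := ⟨hball (lt_of_le_of_lt (Metric.mem_closedBall.1 hu.2) hr.2),
        hu.1, hut⟩
      rw [hdisj] at this
      exact this
    have : volume (A ∩ Metric.closedBall t r) = 0 :=
      le_antisymm (le_trans (measure_mono hsub) (by simp)) zero_le
    simp [this]
  have htend0 : Tendsto (fun r => volume (A ∩ Metric.closedBall t r) /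
      volume (Metric.closedBall t r)) (𝓝[>] (0:ℝ)) (𝓝 0) := by
    apply Tendsto.congr' _ tendsto_const_nhds
    filter_upwards [Ioo_mem_nhdsGT_of_mem ⟨le_refl (0:ℝ), hε⟩] with r hr
    exact (hzero r hr).symm
  have := tendsto_nhds_unique htend0 ht
  rw [Set.indicator_of_mem hmem] at this
  simp at this

/-- a derivative at an accumulation point of a zero set is zero -/
theorem StmtAux.deriv_zero_of_acc {f : ℝ → ℝ} {A : Set ℝ} {t : ℝ} {v : ℝ} (hf : HasDerivAt f v t)
    (h0 : ∀ u ∈ A, f u = 0) (ht : t ∈ A) (hacc : t ∈ closure (A \ {t})) : v = 0 := by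
  have hne : (𝓝[A \ {t}] t).NeBot := mem_closure_iff_nhdsWithin_neBot.1 hacc
  have h1 : Tendsto (slope f t) (𝓝[A \ {t}] t) (𝓝 v) :=
    (hasDerivAt_iff_tendsto_slope.1 hf).mono_left
      (nhdsWithin_mono t (fun u hu => hu.2))
  have h2 : Tendsto (slope f t) (𝓝[A \ {t}] t) (𝓝 0) := by
    apply Tendsto.congr' _ tendsto_const_nhds
    filter_upwards [self_mem_nhdsWithin] with u hu
    rw [slope_def_field, h0 u hu.1, h0 t ht]
    simp
  exact tendsto_nhds_unique h1 h2

/-- an E-valued Lipschitz function with a.e. zero derivative is constant -/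
theorem StmtAux.const_of_ae_deriv_zero {E : Type*} [NormedAddCommGroup E]
    [InnerProductSpace ℝ E] {f : ℝ → E} {K : NNReal} (hf : LipschitzWith K f)
    (hd : ∀ᵐ t ∂(volume : Measure ℝ), HasDerivAt f 0 t) : ∀ s t, f s = f t := by
  have main : ∀ w : E, ∀ s t : ℝ, ⟪w, f s⟫_ℝ = ⟪w, f t⟫_ℝ := by
    intro w
    have hg : ∀ᵐ t ∂(volume : Measure ℝ),
        HasDerivAt (fun u => ⟪w, f u⟫_ℝ) 0 t := by
      filter_upwards [hd] with t ht
      have := (innerSL ℝ w).hasFDerivAt.comp_hasDerivAt t ht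
      simpa [Function.comp_def] using this
    have hlip : LipschitzWith (‖innerSL ℝ w‖₊ * K) (fun u => ⟪w, f u⟫_ℝ) :=
      (innerSL ℝ w).lipschitz.comp hf
    have hanti : Antitone (fun u => ⟪w, f u⟫_ℝ) :=
      StmtAux.lip_antitone_of_ae_deriv_nonpos hlip
        (by filter_upwards [hg] with t ht; exact ⟨0, ht, le_refl 0⟩)
    have hmono : Antitone (fun u => -⟪w, f u⟫_ℝ) := by
      have hlip2 : LipschitzWith (‖innerSL ℝ w‖₊ * K) (fun u => -⟪w, f u⟫_ℝ) := by
        have : (fun u => -⟪w, f u⟫_ℝ) = fun u => ⟪-w, f u⟫_ℝ := by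
          funext u; rw [inner_neg_left]
        rw [this]
        simpa [Function.comp_def] using (innerSL ℝ (-w)).lipschitz.comp hf
      apply StmtAux.lip_antitone_of_ae_deriv_nonpos hlip2
      filter_upwards [hg] with t ht
      exact ⟨0, by simpa [Pi.neg_def] using ht.neg, le_refl 0⟩
    intro s t
    rcases le_total s t with h | h
    · exact le_antisymm (by simpa using hmono h) (hanti h)
    · exact le_antisymm (hanti h) (by simpa using hmono h)
  intro s t
  apply ext_inner_left ℝ
  intro w
  exact main w s t

/-- antitone and periodic implies constant -/
theorem StmtAux.const_of_antitone_periodic {h : ℝ → ℝ} {T : ℝ} (hT : 0 < T)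
    (hanti : Antitone h) (hper : ∀ t, h (t + T) = h t) : ∀ s t, h s = h t := by
  have key : ∀ s t : ℝ, s ≤ t → h s = h t := by
    intro s t hst
    refine le_antisymm ?_ (hanti hst)
    obtain ⟨m, hm⟩ := exists_nat_ge ((t - s) / T)
    have hTm : t ≤ s + m * T := by
      rw [div_le_iff₀ hT] at hm
      linarith
    have hper2 : ∀ m : ℕ, h (s + m * T) = h s := by
      intro m
      induction m with
      | zero => simp
      | succ p ih =>
        have : s + (p + 1 : ℕ) * T = (s + p * T) + T := by push_cast; ring
        rw [this, hper, ih]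
    calc h t ≥ h (s + m * T) := hanti hTm
    _ = h s := hper2 m
  intro s t
  rcases le_total s t with hst | hst
  · exact key s t hst
  · exact (key t s hst).symm

variable {E : Type*} [NormedAddCommGroup E] [InnerProductSpace ℝ E] [FiniteDimensional ℝ E]
  {k : ℕ} {n : Fin k → E}

/-- if a direction `v` has nonpositive inner products with all active normals, then
`⟪ζ, v⟫ ≤ 0` for any `ζ` in the normal cone. -/
theorem StmtAux.inner_nonpos_of_normalCone {cc : Fin k → ℝ} {z v ζ : E}
    (hz : ∀ i, ⟪z, n i⟫_ℝ ≤ cc i)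
    (hv : ∀ i, ⟪z, n i⟫_ℝ = cc i → ⟪v, n i⟫_ℝ ≤ 0)
    (hζ : ζ ∈ normalCone (⋂ i, {w : E | ⟪w, n i⟫_ℝ ≤ cc i}) z) :
    ⟪ζ, v⟫_ℝ ≤ 0 := by
  have hev : ∀ᶠ η in 𝓝[>] (0:ℝ), z + η • v ∈ ⋂ i, {w : E | ⟪w, n i⟫_ℝ ≤ cc i} := by
    have : ∀ᶠ η in 𝓝[>] (0:ℝ), ∀ i, ⟪z + η • v, n i⟫_ℝ ≤ cc i := by
      rw [eventually_all]
      intro i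
      by_cases hact : ⟪z, n i⟫_ℝ = cc i
      · filter_upwards [self_mem_nhdsWithin] with η hη
        rw [inner_add_left, real_inner_smul_left]
        have := hv i hact
        have hη' : (0:ℝ) < η := hη
        nlinarith
      · have hlt : ⟪z, n i⟫_ℝ < cc i := lt_of_le_of_ne (hz i) hact
        have hcont : ContinuousAt (fun η : ℝ => ⟪z + η • v, n i⟫_ℝ) 0 := by
          apply Continuous.continuousAt
          exact (continuous_const.add (continuous_id.smul continuous_const)).inner
            continuous_const
        have h0 : (fun η : ℝ => ⟪z + η • v, n i⟫_ℝ) 0 < cc i := by simpa using hlt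
        have := hcont.eventually_lt_const h0
        exact (this.filter_mono nhdsWithin_le_nhds).mono (fun η h => le_of_lt h)
    filter_upwards [this] with η hη
    exact Set.mem_iInter.2 fun i => hη i
  obtain ⟨η, hmem, hη⟩ := (hev.and self_mem_nhdsWithin).exists
  have := hζ.2 _ hmem
  rw [add_sub_cancel_left, real_inner_smul_right] at this
  have hη' : (0:ℝ) < η := hη
  nlinarith

/-- elements of the normal cone lie in the span of the active normals. -/
theorem StmtAux.normalCone_subset_span {cc : Fin k → ℝ} {z ζ : E}
    (hz : ∀ i, ⟪z, n i⟫_ℝ ≤ cc i)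
    (hζ : ζ ∈ normalCone (⋂ i, {w : E | ⟪w, n i⟫_ℝ ≤ cc i}) z) :
    ζ ∈ Submodule.span ℝ (n '' {i | ⟪z, n i⟫_ℝ = cc i}) := by
  set V := Submodule.span ℝ (n '' {i | ⟪z, n i⟫_ℝ = cc i}) with hV
  set p : E := (Submodule.orthogonalProjection V ζ : E) with hp
  set q : E := ζ - p with hq
  have hqV : q ∈ Vᗮ := Submodule.sub_starProjection_mem_orthogonal ζ
  have hqn : ∀ i, ⟪z, n i⟫_ℝ = cc i → ⟪q, n i⟫_ℝ = 0 := by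
    intro i hact
    have hni : n i ∈ V := Submodule.subset_span ⟨i, hact, rfl⟩
    exact (Submodule.mem_orthogonal' V q).1 hqV _ hni
  have hle : ⟪ζ, q⟫_ℝ ≤ 0 :=
    StmtAux.inner_nonpos_of_normalCone hz (fun i hact => le_of_eq (hqn i hact)) hζ
  have hpq : ⟪p, q⟫_ℝ = 0 := by
    have hpV : p ∈ V := (Submodule.orthogonalProjection V ζ).2
    exact (Submodule.mem_orthogonal V q).1 hqV p hpV
  have hqq : ⟪ζ, q⟫_ℝ = ‖q‖ ^ 2 := by
    have : ζ = p + q := by simp [hq]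
    rw [this, inner_add_left, hpq, real_inner_self_eq_norm_sq]
    ring
  have : ‖q‖ ^ 2 ≤ 0 := by rw [← hqq]; exact hle
  have hq0 : q = 0 := by
    have := norm_eq_zero.1 (le_antisymm (by nlinarith [norm_nonneg q]) (norm_nonneg q))
    exact this
  have : ζ = p := by rw [← sub_eq_zero]; exact hq0
  rw [this]
  exact (Submodule.orthogonalProjection V ζ).2

/-- dual vectors for a linearly independent finite family -/
theorem StmtAux.dualVec (s : Finset (Fin k))
    (li : LinearIndependent ℝ (fun i : s => n i)) (j : Fin k) (hj : j ∈ s) :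
    ∃ u : E, ⟪u, n j⟫_ℝ = 1 ∧ ∀ i ∈ s, i ≠ j → ⟪u, n i⟫_ℝ = 0 := by
  classical
  set V := Submodule.span ℝ (n '' (↑s \ {j})) with hV
  have hnotmem : n j ∉ V := by
    have h1 : (⟨j, hj⟩ : s) ∉ {i : s | (i : Fin k) ≠ j} := by simp
    have h2 := li.notMem_span_image (s := {i : s | (i : Fin k) ≠ j}) h1
    have himg : (fun i : s => n i) '' {i : s | (i : Fin k) ≠ j} = n '' (↑s \ {j}) := by
      ext u
      constructor
      · rintro ⟨⟨i, his⟩, hi, rfl⟩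
        exact ⟨i, ⟨his, hi⟩, rfl⟩
      · rintro ⟨i, ⟨his, hij⟩, rfl⟩
        exact ⟨⟨i, his⟩, hij, rfl⟩
    rwa [himg] at h2
  set u0 : E := n j - (Submodule.orthogonalProjection V (n j) : E) with hu0
  have hu0V : u0 ∈ Vᗮ := Submodule.sub_starProjection_mem_orthogonal (n j)
  have hu0ne : u0 ≠ 0 := by
    intro h
    apply hnotmem
    have : n j = (Submodule.orthogonalProjection V (n j) : E) := by
      rw [← sub_eq_zero]; exact h
    rw [this]
    exact (Submodule.orthogonalProjection V (n j)).2
  have hinner : ⟪u0, n j⟫_ℝ = ‖u0‖ ^ 2 := by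
    have hdecomp : n j = u0 + (Submodule.orthogonalProjection V (n j) : E) := by simp [hu0]
    have horth : ⟪u0, (Submodule.orthogonalProjection V (n j) : E)⟫_ℝ = 0 := by
      have hpV : (Submodule.orthogonalProjection V (n j) : E) ∈ V := (Submodule.orthogonalProjection V (n j)).2
      exact (Submodule.mem_orthogonal' V u0).1 hu0V _ hpV
    have hstep : ⟪u0, n j⟫_ℝ = ⟪u0, u0 + (Submodule.orthogonalProjection V (n j) : E)⟫_ℝ := by
      rw [← hdecomp]
    rw [hstep, inner_add_right, horth, real_inner_self_eq_norm_sq]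
    ring
  have hnorm : ‖u0‖ ^ 2 ≠ 0 := by
    simpa using hu0ne
  refine ⟨(‖u0‖ ^ 2)⁻¹ • u0, ?_, ?_⟩
  · rw [real_inner_smul_left, hinner]
    simp [hnorm]
  · intro i his hij
    rw [real_inner_smul_left]
    have hniV : n i ∈ V := Submodule.subset_span ⟨i, ⟨his, hij⟩, rfl⟩
    have : ⟪u0, n i⟫_ℝ = 0 := (Submodule.mem_orthogonal' V u0).1 hu0V _ hniV
    rw [this]; simp

/-- The key positivity property of the normal cone against a uniform dual vector `w`. -/
theorem StmtAux.normalCone_inner_w {cc : Fin k → ℝ} {z ζ w : E} (s : Finset (Fin k))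
    (li : LinearIndependent ℝ (fun i : s => n i))
    (hz : ∀ i, ⟪z, n i⟫_ℝ ≤ cc i)
    (hJs : ∀ i, ⟪z, n i⟫_ℝ = cc i → i ∈ s)
    (hw : ∀ i, ⟪z, n i⟫_ℝ = cc i → ⟪w, n i⟫_ℝ = 1)
    (hζ : ζ ∈ normalCone (⋂ i, {w' : E | ⟪w', n i⟫_ℝ ≤ cc i}) z) :
    0 ≤ ⟪w, ζ⟫_ℝ ∧ (⟪w, ζ⟫_ℝ = 0 → ζ = 0) := by
  classical
  have hspan := StmtAux.normalCone_subset_span hz hζ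
  rw [Finsupp.mem_span_image_iff_linearCombination] at hspan
  obtain ⟨l, hlsupp, hlsum⟩ := hspan
  rw [Finsupp.mem_supported] at hlsupp
  have hζsum : ζ = ∑ i ∈ l.support, l i • n i := by
    rw [← hlsum, Finsupp.linearCombination_apply, Finsupp.sum]
  have hact : ∀ i ∈ l.support, ⟪z, n i⟫_ℝ = cc i := fun i hi => hlsupp hi
  have hnonneg : ∀ j ∈ l.support, 0 ≤ l j := by
    intro j hjsupp
    have hjact : ⟪z, n j⟫_ℝ = cc j := hact j hjsupp
    have hjs : j ∈ s := hJs j hjact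
    obtain ⟨u, hu1, hu0⟩ := StmtAux.dualVec s li j hjs
    have hmove : ⟪ζ, -u⟫_ℝ ≤ 0 := by
      apply StmtAux.inner_nonpos_of_normalCone hz _ hζ
      intro i hiact
      rw [inner_neg_left]
      rcases eq_or_ne i j with rfl | hij
      · rw [hu1]; norm_num
      · rw [hu0 i (hJs i hiact) hij]; norm_num
    have huζ : ⟪u, ζ⟫_ℝ = l j := by
      rw [hζsum, inner_sum]
      rw [Finset.sum_eq_single j]
      · rw [real_inner_smul_right, hu1, mul_one]
      · intro i hi hij
        rw [real_inner_smul_right, hu0 i (hJs i (hact i hi)) hij, mul_zero]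
      · intro h; exact absurd hjsupp h
    rw [inner_neg_right] at hmove
    have : 0 ≤ ⟪ζ, u⟫_ℝ := by linarith
    rw [real_inner_comm, huζ] at this
    exact this
  have hwζ : ⟪w, ζ⟫_ℝ = ∑ i ∈ l.support, l i := by
    rw [hζsum, inner_sum]
    apply Finset.sum_congr rfl
    intro i hi
    rw [real_inner_smul_right, hw i (hact i hi), mul_one]
  constructor
  · rw [hwζ]; exact Finset.sum_nonneg hnonneg
  · intro h0
    rw [hwζ] at h0
    have hall : ∀ i ∈ l.support, l i = 0 :=
      (Finset.sum_eq_zero_iff_of_nonneg hnonneg).1 h0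
    have : l = 0 := by
      ext i
      by_cases hi : i ∈ l.support
      · exact hall i hi
      · exact Finsupp.notMem_support_iff.1 hi
    rw [hζsum, this]
    simp

omit [FiniteDimensional ℝ E] in
/-- a vector in a span which is orthogonal to the generators is zero -/
theorem StmtAux.span_perp_self {S : Set E} {v : E} (hv : v ∈ Submodule.span ℝ S)
    (hperp : ∀ u ∈ S, ⟪v, u⟫_ℝ = 0) : v = 0 := by
  have hall : ∀ w ∈ Submodule.span ℝ S, ⟪v, w⟫_ℝ = 0 := by
    intro w hw
    induction hw using Submodule.span_induction with
    | mem u hu => exact hperp u hu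
    | zero => simp
    | add a b _ _ ha hb => rw [inner_add_right, ha, hb]; ring
    | smul r a _ ha => rw [real_inner_smul_right, ha]; ring
  have hv0 := hall v hv
  rw [real_inner_self_eq_norm_sq] at hv0
  have := norm_eq_zero.1 (pow_eq_zero_iff (n := 2) (by norm_num) |>.1 hv0)
  exact this

end Aux

theorem stmt_16 {E : Type*} [NormedAddCommGroup E] [InnerProductSpace ℝ E]
    [FiniteDimensional ℝ E]
    (T : ℝ) (hT : 0 < T) {k : ℕ} (hk : Module.finrank ℝ E ≤ k)
    (n : Fin k → E) (c : Fin k → ℝ → ℝ)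
    (Lc : Fin k → NNReal) (hc : ∀ i, LipschitzWith (Lc i) (c i))
    (hind : ∀ s : Finset (Fin k), s.card = Module.finrank ℝ E →
      LinearIndependent ℝ (fun i : s => n i))
    (C : ℝ → Set E) (hC : ∀ t, C t = ⋂ i, {z : E | ⟪z, n i⟫_ℝ ≤ c i t})
    (M : ℝ) (hbdd : ∀ t, C t ⊆ Metric.closedBall 0 M)
    (hcard : ∀ t : ℝ, ∀ z ∈ C t,
      Set.ncard {i : Fin k | ⟪z, n i⟫_ℝ = c i t} ≤ Module.finrank ℝ E)
    (x y : ℝ → E) (hx : IsSweepingSolution C x) (hy : IsSweepingSolution C y)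
    (hxT : ∀ t, x (t + T) = x t) (hyT : ∀ t, y (t + T) = y t)
    (hxnc : ∃ s t : ℝ, x s ≠ x t) (hync : ∃ s t : ℝ, y s ≠ y t)
    (hJ : ∀ t : ℝ, {i : Fin k | ⟪x t, n i⟫_ℝ = c i t} = {i : Fin k | ⟪y t, n i⟫_ℝ = c i t})
    (hconst : ∀ s t : ℝ, ‖x s - y s‖ = ‖x t - y t‖) :
    x = y := by
  classical
  rcases subsingleton_or_nontrivial E with hE | hE
  · funext t; exact Subsingleton.elim _ _
  set d := Module.finrank ℝ E with hdd
  have hd : 0 < d := Module.finrank_pos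
  obtain ⟨Kx, hKx⟩ := hx.1
  obtain ⟨Ky, hKy⟩ := hy.1
  --对 inner with fixed vector: derivative helper
  have hinner_der : ∀ (wv : E) (g : ℝ → E) (vg : E) (tg : ℝ), HasDerivAt g vg tg →
      HasDerivAt (fun u => ⟪wv, g u⟫_ℝ) ⟪wv, vg⟫_ℝ tg := by
    intro wv g vg tg hg
    have := (innerSL ℝ wv).hasFDerivAt.comp_hasDerivAt tg hg
    simpa [Function.comp_def] using this
  -- membership unfolded
  have hzx : ∀ t i, ⟪x t, n i⟫_ℝ ≤ c i t := by
    intro t i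
    have := hx.2.1 t
    rw [hC t] at this
    exact Set.mem_iInter.1 this i
  have hzy : ∀ t i, ⟪y t, n i⟫_ℝ ≤ c i t := by
    intro t i
    have := hy.2.1 t
    rw [hC t] at this
    exact Set.mem_iInter.1 this i
  -- active sets for y from hJ
  have hyact : ∀ t i, ⟪x t, n i⟫_ℝ = c i t → ⟪y t, n i⟫_ℝ = c i t := by
    intro t i hi
    have : i ∈ {i : Fin k | ⟪x t, n i⟫_ℝ = c i t} := hi
    rw [hJ t] at this
    exact this
  -- Step A : x - y is constant
  have hAmeas : ∀ i : Fin k, MeasurableSet {u : ℝ | ⟪x u, n i⟫_ℝ = c i u} := by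
    intro i
    apply IsClosed.measurableSet
    apply isClosed_eq
    · exact (hKx.continuous.inner continuous_const)
    · exact (hc i).continuous
  have hφ : ∀ᵐ t ∂(volume : Measure ℝ), HasDerivAt (fun u => x u - y u) 0 t := by
    filter_upwards [hx.2.2, hy.2.2,
      MeasureTheory.ae_all_iff.2 (fun i : Fin k => StmtAux.ae_acc (hAmeas i))]
      with t hxd hyd haccs
    obtain ⟨vx, hvx, hvmem⟩ := hxd
    obtain ⟨vy, hvy, hwmem⟩ := hyd
    rw [hC t] at hvmem hwmem
    have hxin : vx ∈ Submodule.span ℝ (n '' {i | ⟪x t, n i⟫_ℝ = c i t}) := by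
      have := StmtAux.normalCone_subset_span (cc := fun i => c i t) (hzx t) hvmem
      have h2 := Submodule.neg_mem _ this
      simpa using h2
    have hyin : vy ∈ Submodule.span ℝ (n '' {i | ⟪x t, n i⟫_ℝ = c i t}) := by
      have := StmtAux.normalCone_subset_span (cc := fun i => c i t) (hzy t) hwmem
      have h2 := Submodule.neg_mem _ this
      rw [← hJ t] at h2
      simpa using h2
    have hdin : vx - vy ∈ Submodule.span ℝ (n '' {i | ⟪x t, n i⟫_ℝ = c i t}) :=
      Submodule.sub_mem _ hxin hyin
    have hperp : ∀ i, ⟪x t, n i⟫_ℝ = c i t → ⟪n i, vx - vy⟫_ℝ = 0 := by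
      intro i hiact
      have hψder : HasDerivAt (fun u => ⟪n i, x u - y u⟫_ℝ) ⟪n i, vx - vy⟫_ℝ t :=
        hinner_der (n i) (fun u => x u - y u) (vx - vy) t (hvx.sub hvy)
      have hzset : ∀ u ∈ {u : ℝ | ⟪x u, n i⟫_ℝ = c i u},
          (fun u => ⟪n i, x u - y u⟫_ℝ) u = 0 := by
        intro u hu
        have h1 : ⟪x u, n i⟫_ℝ = c i u := hu
        have h2 : ⟪y u, n i⟫_ℝ = c i u := hyact u i h1
        show ⟪n i, x u - y u⟫_ℝ = 0
        have e1 : ⟪n i, x u⟫_ℝ = c i u := by rw [real_inner_comm]; exact h1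
        have e2 : ⟪n i, y u⟫_ℝ = c i u := by rw [real_inner_comm]; exact h2
        rw [inner_sub_right, e1, e2]
        ring
      exact StmtAux.deriv_zero_of_acc hψder hzset hiact (haccs i hiact)
    have hvd0 : vx - vy = 0 := by
      apply StmtAux.span_perp_self hdin
      rintro u ⟨i, hiact, rfl⟩
      rw [real_inner_comm]
      exact hperp i hiact
    have := hvx.sub hvy
    rwa [hvd0] at this
  have φconst : ∀ s t : ℝ, x s - y s = x t - y t :=
    StmtAux.const_of_ae_deriv_zero (hKx.sub hKy) hφ
  -- ever-active index set
  set Jhat : Finset (Fin k) :=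
    Finset.univ.filter (fun i => ∃ t, ⟪x t, n i⟫_ℝ = c i t) with hJhat
  have hactiveJhat : ∀ t i, ⟪x t, n i⟫_ℝ = c i t → i ∈ Jhat := by
    intro t i h
    rw [hJhat, Finset.mem_filter]
    exact ⟨Finset.mem_univ i, t, h⟩
  rcases lt_or_ge Jhat.card d with hcase | hcase
  · -- few ever-active constraints: x must be constant, contradiction
    exfalso
    obtain ⟨s, hsub, hscard⟩ := Finset.exists_superset_card_eq hcase.le
      (by rw [Fintype.card_fin]; exact hk)
    have li := hind s hscard
    have hdualall : ∀ j ∈ Jhat, ∃ u : E, ⟪u, n j⟫_ℝ = 1 ∧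
        ∀ i ∈ s, i ≠ j → ⟪u, n i⟫_ℝ = 0 :=
      fun j hj => StmtAux.dualVec s li j (hsub hj)
    choose! u hu1 hu0 using hdualall
    set w : E := ∑ j ∈ Jhat, u j with hw
    have hwn : ∀ i ∈ Jhat, ⟪w, n i⟫_ℝ = 1 := by
      intro i hi
      rw [hw, sum_inner]
      rw [Finset.sum_eq_single i]
      · exact hu1 i hi
      · intro j hj hji
        exact hu0 j hj i (hsub hi) (Ne.symm hji)
      · intro h; exact absurd hi h
    -- the function t ↦ ⟪w, x t⟫ is antitone
    set h : ℝ → ℝ := fun t => ⟪w, x t⟫_ℝ with hh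
    have hhlip : LipschitzWith (‖innerSL ℝ w‖₊ * Kx) h := (innerSL ℝ w).lipschitz.comp hKx
    have hwkey : ∀ t (v : E), HasDerivAt x v t → -v ∈ normalCone (C t) (x t) →
        0 ≤ ⟪w, -v⟫_ℝ ∧ (⟪w, -v⟫_ℝ = 0 → -v = 0) := by
      intro t v hv hnc
      rw [hC t] at hnc
      exact StmtAux.normalCone_inner_w (cc := fun i => c i t) s li (hzx t)
        (fun i hi => hsub (hactiveJhat t i hi)) (fun i hi => hwn i (hactiveJhat t i hi)) hnc
    have hanti : Antitone h := by
      apply StmtAux.lip_antitone_of_ae_deriv_nonpos hhlip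
      filter_upwards [hx.2.2] with t ht
      obtain ⟨v, hv, hnc⟩ := ht
      refine ⟨⟪w, v⟫_ℝ, hinner_der w x v t hv, ?_⟩
      have := (hwkey t v hv hnc).1
      rw [inner_neg_right] at this
      linarith
    have hconsth : ∀ s' t' : ℝ, h s' = h t' := by
      apply StmtAux.const_of_antitone_periodic hT hanti
      intro t
      simp only [hh, hxT t]
    -- so the derivative of x vanishes a.e.
    have hxder0 : ∀ᵐ t ∂(volume : Measure ℝ), HasDerivAt x 0 t := by
      filter_upwards [hx.2.2] with t ht
      obtain ⟨v, hv, hnc⟩ := ht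
      have hder : HasDerivAt h ⟪w, v⟫_ℝ t := hinner_der w x v t hv
      have hhc : h = fun _ => h 0 := funext fun u => hconsth u 0
      have hder0 : HasDerivAt h 0 t := by
        rw [hhc]; exact hasDerivAt_const t (h 0)
      have hv0 : ⟪w, v⟫_ℝ = 0 := hder.unique hder0
      have : -v = 0 := (hwkey t v hv hnc).2 (by rw [inner_neg_right, hv0]; ring)
      have hv00 : v = 0 := by
        have := congrArg Neg.neg this
        simpa using this
      rwa [hv00] at hv
    have hxconst := StmtAux.const_of_ae_deriv_zero hKx hxder0
    obtain ⟨s', t', hne⟩ := hxnc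
    exact hne (hxconst s' t')
  · -- enough ever-active constraints: conclude x = y
    obtain ⟨s, hsub, hscard⟩ := Finset.exists_subset_card_eq hcase
    have li := hind s hscard
    have hperp : ∀ i ∈ s, ⟪x 0 - y 0, n i⟫_ℝ = 0 := by
      intro i his
      have : i ∈ Jhat := hsub his
      rw [hJhat, Finset.mem_filter] at this
      obtain ⟨-, t, hti⟩ := this
      have h2 : ⟪y t, n i⟫_ℝ = c i t := hyact t i hti
      have h3 : ⟪x t - y t, n i⟫_ℝ = 0 := by
        rw [inner_sub_left, hti, h2]; ring
      rw [φconst 0 t]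
      exact h3
    haveI hne : Nonempty s := by
      have : s.Nonempty := Finset.card_pos.1 (by rw [hscard]; exact hd)
      exact ⟨⟨this.choose, this.choose_spec⟩⟩
    have hspan_top : Submodule.span ℝ (n '' ↑s) = ⊤ := by
      have h1 := (basisOfLinearIndependentOfCardEqFinrank li
        (by rw [Fintype.card_coe, hscard] : Fintype.card s = Module.finrank ℝ E)).span_eq
      rw [coe_basisOfLinearIndependentOfCardEqFinrank] at h1
      have h2 : Set.range (fun i : s => n i) = n '' ↑s := by
        ext u
        constructor
        · rintro ⟨⟨i, his⟩, rfl⟩; exact ⟨i, his, rfl⟩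
        · rintro ⟨i, his, rfl⟩; exact ⟨⟨i, his⟩, rfl⟩
      rwa [h2] at h1
    have hz0 : x 0 - y 0 = 0 := by
      apply StmtAux.span_perp_self (S := n '' ↑s)
      · rw [hspan_top]; trivial
      · rintro u ⟨i, his, rfl⟩
        exact hperp i his
    funext t
    have := φconst t 0
    rw [hz0] at this
    exact sub_eq_zero.1 this
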